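/- arXiv:2203.01473 — 11 statements merged into one kernel-verified Lean document; each statement's English description precedes it below -/
import Mathlib

section
/- A bounded linear operator A on a complex Hilbert space H is posinormal (i.e., there exists a positive operator P with AA* = A*PA) if and only if the range of A is contained in the range of A*. -/
open ContinuousLinearMap
open scoped InnerProductSpace

section Aux

variable {H : Type*} [NormedAddCommGroup H] [InnerProductSpace ℂ H] [CompleteSpace H]

lemma posinormal_norm_adjoint_le {A P : H →L[ℂ] H} (hP : P.IsPositive)
    (heq : A ∘L adjoint A = adjoint A ∘L P ∘L A) (w : H) :
    ‖adjoint A w‖ ≤ Real.sqrt ‖P‖ * ‖A w‖ := by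
  have hcong := congrArg (fun T : H →L[ℂ] H => ⟪T w, w⟫_ℂ) heq
  simp only [comp_apply] at hcong
  have hcong2 : ⟪adjoint A w, adjoint A w⟫_ℂ = ⟪P (A w), A w⟫_ℂ := by
    rw [adjoint_inner_right A (adjoint A w) w, hcong, adjoint_inner_left]
  have e1 : ‖adjoint A w‖ ^ 2 = RCLike.re ⟪P (A w), A w⟫_ℂ := by
    rw [← hcong2]
    exact (inner_self_eq_norm_sq _).symm
  have e2 : RCLike.re ⟪P (A w), A w⟫_ℂ ≤ ‖P‖ * ‖A w‖ ^ 2 := by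
    calc RCLike.re ⟪P (A w), A w⟫_ℂ ≤ ‖⟪P (A w), A w⟫_ℂ‖ := RCLike.re_le_norm _
      _ ≤ ‖P (A w)‖ * ‖A w‖ := norm_inner_le_norm _ _
      _ ≤ (‖P‖ * ‖A w‖) * ‖A w‖ := by gcongr; exact P.le_opNorm _
      _ = ‖P‖ * ‖A w‖ ^ 2 := by ring
  have e3 : ‖adjoint A w‖ ^ 2 ≤ (Real.sqrt ‖P‖ * ‖A w‖) ^ 2 := by
    rw [mul_pow, Real.sq_sqrt (norm_nonneg P)]
    exact e1 ▸ e2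
  calc ‖adjoint A w‖ = Real.sqrt (‖adjoint A w‖ ^ 2) := by
        rw [Real.sqrt_sq (norm_nonneg _)]
    _ ≤ Real.sqrt ((Real.sqrt ‖P‖ * ‖A w‖) ^ 2) := Real.sqrt_le_sqrt e3
    _ = Real.sqrt ‖P‖ * ‖A w‖ := Real.sqrt_sq
        (mul_nonneg (Real.sqrt_nonneg _) (norm_nonneg _))

end Aux

theorem posinormal_iff_range_le
    {H : Type*} [NormedAddCommGroup H] [InnerProductSpace ℂ H] [CompleteSpace H]
    (A : H →L[ℂ] H) :
    (∃ P : H →L[ℂ] H, P.IsPositive ∧ A ∘L adjoint A = adjoint A ∘L P ∘L A) ↔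
      LinearMap.range (A : H →ₗ[ℂ] H) ≤ LinearMap.range ((adjoint A : H →L[ℂ] H) : H →ₗ[ℂ] H) := by
  constructor
  · rintro ⟨P, hP, heq⟩
    rintro y ⟨x, rfl⟩
    -- the functional `A w ↦ ⟪x, adjoint A w⟫`
    set φ : H →L[ℂ] ℂ := (innerSL ℂ x) ∘L adjoint A with hφ
    have hker : LinearMap.ker (A : H →ₗ[ℂ] H) ≤ LinearMap.ker (φ : H →ₗ[ℂ] ℂ) := by
      intro w hw
      have hw' : A w = 0 := hw
      have : ‖adjoint A w‖ ≤ Real.sqrt ‖P‖ * ‖A w‖ :=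
        posinormal_norm_adjoint_le hP heq w
      rw [hw', norm_zero, mul_zero] at this
      have hz : adjoint A w = 0 := norm_le_zero_iff.mp this
      show φ w = 0
      simp [hφ, hz]
    set f₁ : LinearMap.range (A : H →ₗ[ℂ] H) →ₗ[ℂ] ℂ :=
      ((LinearMap.ker (A : H →ₗ[ℂ] H)).liftQ (φ : H →ₗ[ℂ] ℂ) hker) ∘ₗ
        (A : H →ₗ[ℂ] H).quotKerEquivRange.symm.toLinearMap with hf₁
    have key : ∀ w : H, f₁ ⟨A w, ⟨w, rfl⟩⟩ = ⟪x, adjoint A w⟫_ℂ := by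
      intro w
      have h1 : (A : H →ₗ[ℂ] H).quotKerEquivRange.symm ⟨A w, ⟨w, rfl⟩⟩ =
          Submodule.Quotient.mk w := by
        rw [LinearEquiv.symm_apply_eq]
        exact Subtype.ext ((A : H →ₗ[ℂ] H).quotKerEquivRange_apply_mk w)
      simp only [hf₁, LinearMap.comp_apply, LinearEquiv.coe_coe, h1, Submodule.liftQ_apply]
      rfl
    have fbound : ∀ v : LinearMap.range (A : H →ₗ[ℂ] H),
        ‖f₁ v‖ ≤ (Real.sqrt ‖P‖ * ‖x‖) * ‖v‖ := by
      rintro ⟨v, w, rfl⟩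
      show ‖f₁ ⟨A w, ⟨w, rfl⟩⟩‖ ≤
        (Real.sqrt ‖P‖ * ‖x‖) * ‖(⟨A w, ⟨w, rfl⟩⟩ : LinearMap.range (A : H →ₗ[ℂ] H))‖
      rw [key w]
      calc ‖⟪x, adjoint A w⟫_ℂ‖ ≤ ‖x‖ * ‖adjoint A w‖ := norm_inner_le_norm _ _
        _ ≤ ‖x‖ * (Real.sqrt ‖P‖ * ‖A w‖) := by
            gcongr; exact posinormal_norm_adjoint_le hP heq w
        _ = (Real.sqrt ‖P‖ * ‖x‖) * ‖A w‖ := by ring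
        _ = (Real.sqrt ‖P‖ * ‖x‖) * ‖(⟨A w, ⟨w, rfl⟩⟩ : LinearMap.range (A : H →ₗ[ℂ] H))‖ := rfl
    set f : LinearMap.range (A : H →ₗ[ℂ] H) →L[ℂ] ℂ :=
      f₁.mkContinuous (Real.sqrt ‖P‖ * ‖x‖) fbound with hf
    obtain ⟨g, hg, -⟩ := exists_extension_norm_eq (LinearMap.range (A : H →ₗ[ℂ] H)) f
    set z := (InnerProductSpace.toDual ℂ H).symm g with hz
    refine ⟨z, ?_⟩
    apply ext_inner_right ℂ
    intro w
    calc ⟪adjoint A z, w⟫_ℂ = ⟪z, A w⟫_ℂ := adjoint_inner_left A w z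
      _ = g (A w) := InnerProductSpace.toDual_symm_apply
      _ = f ⟨A w, ⟨w, rfl⟩⟩ := hg ⟨A w, ⟨w, rfl⟩⟩
      _ = ⟪x, adjoint A w⟫_ℂ := key w
      _ = ⟪A x, w⟫_ℂ := adjoint_inner_right A x w
  · intro hr
    set K : Submodule ℂ H := (LinearMap.ker ((adjoint A : H →L[ℂ] H) : H →ₗ[ℂ] H))ᗮ with hK
    haveI : CompleteSpace K := (LinearMap.ker ((adjoint A : H →L[ℂ] H) : H →ₗ[ℂ] H)).isClosed_orthogonal.completeSpace_coe
    set Rlin : K →ₗ[ℂ] H := ((adjoint A : H →L[ℂ] H) : H →ₗ[ℂ] H) ∘ₗ K.subtype with hR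
    have hRapp : ∀ k : K, Rlin k = adjoint A (k : H) := fun k => rfl
    have hinj : Function.Injective Rlin := by
      intro k₁ k₂ hk
      have h0 : adjoint A ((k₁ : H) - (k₂ : H)) = 0 := by
        rw [map_sub, ← hRapp, ← hRapp, hk, sub_self]
      have hmem : (k₁ : H) - (k₂ : H) ∈ LinearMap.ker ((adjoint A : H →L[ℂ] H) : H →ₗ[ℂ] H) := h0
      have hmemK : (k₁ : H) - (k₂ : H) ∈ K := K.sub_mem k₁.2 k₂.2
      have : ⟪(k₁ : H) - (k₂ : H), (k₁ : H) - (k₂ : H)⟫_ℂ = 0 := hmemK _ hmem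
      have := inner_self_eq_zero.mp this
      exact Subtype.ext (sub_eq_zero.mp this)
    have hKorth : Kᗮ = LinearMap.ker ((adjoint A : H →L[ℂ] H) : H →ₗ[ℂ] H) := by
      rw [hK, Submodule.orthogonal_orthogonal_eq_closure]
      exact IsClosed.submodule_topologicalClosure_eq (ContinuousLinearMap.isClosed_ker (adjoint A))
    have hrange : ∀ x : H, A x ∈ LinearMap.range Rlin := by
      intro x
      obtain ⟨u, hu⟩ := hr ⟨x, rfl⟩
      refine ⟨K.orthogonalProjection u, ?_⟩
      have hsub : u - (K.orthogonalProjection u : H) ∈ LinearMap.ker ((adjoint A : H →L[ℂ] H) : H →ₗ[ℂ] H) :=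
        hKorth.le (K.sub_starProjection_mem_orthogonal u)
      have : adjoint A (u - (K.orthogonalProjection u : H)) = 0 := hsub
      rw [map_sub, sub_eq_zero] at this
      rw [hRapp, ← this, (show adjoint A u = A x from hu)]
    set e : K ≃ₗ[ℂ] LinearMap.range Rlin := LinearEquiv.ofInjective Rlin hinj with he
    set Clin : H →ₗ[ℂ] H :=
      K.subtype ∘ₗ (e.symm : LinearMap.range Rlin →ₗ[ℂ] K) ∘ₗ
        ((A : H →ₗ[ℂ] H).codRestrict (LinearMap.range Rlin) hrange) with hC
    have hCmem : ∀ x : H, Clin x ∈ K := fun x => (e.symm _).2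
    have hCeq : ∀ x : H, adjoint A (Clin x) = A x := by
      intro x
      have h1 : Rlin (e.symm ⟨A x, hrange x⟩) = A x := by
        have := e.apply_symm_apply ⟨A x, hrange x⟩
        have h2 := congrArg (Subtype.val) this
        rwa [LinearEquiv.ofInjective_apply] at h2
      exact h1
    have hCuniq : ∀ (x : H) (y : H), y ∈ K → adjoint A y = A x → y = Clin x := by
      intro x y hy hAy
      have : Rlin ⟨y, hy⟩ = Rlin ⟨Clin x, hCmem x⟩ := by
        rw [hRapp, hRapp]; simp only [hAy, hCeq x]
      exact congrArg Subtype.val (hinj this)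
    have hgraph : (Clin.graph : Set (H × H)) =
        {p : H × H | p.2 ∈ (K : Set H)} ∩ {p : H × H | adjoint A p.2 = A p.1} := by
      ext ⟨a, b⟩
      simp only [SetLike.mem_coe, LinearMap.mem_graph_iff, Set.mem_inter_iff, Set.mem_setOf_eq]
      constructor
      · rintro rfl
        exact ⟨hCmem a, hCeq a⟩
      · rintro ⟨hb, hab⟩
        exact hCuniq a b hb hab
    have hclosed : IsClosed (Clin.graph : Set (H × H)) := by
      rw [hgraph]
      exact ((LinearMap.ker ((adjoint A : H →L[ℂ] H) : H →ₗ[ℂ] H)).isClosed_orthogonal.preimage continuous_snd).inter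
        (isClosed_eq ((adjoint A).continuous.comp continuous_snd)
          (A.continuous.comp continuous_fst))
    set C : H →L[ℂ] H := ⟨Clin, Clin.continuous_of_isClosed_graph hclosed⟩ with hCdef
    have h1' : ∀ y, adjoint A (C y) = A y := hCeq
    have hAC : A = adjoint A ∘L C := by
      ext y; exact (h1' y).symm
    have h2 : adjoint A = adjoint C ∘L A := by
      conv_lhs => rw [hAC]
      rw [adjoint_comp, adjoint_adjoint]
    have h2' : ∀ y, adjoint C (A y) = adjoint A y := by
      intro y
      conv_rhs => rw [h2]
      rfl
    refine ⟨C ∘L adjoint C, ?_, ?_⟩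
    · simpa [one_def] using (isPositive_one (E := H) (𝕜 := ℂ)).conj_adjoint C
    · ext w
      simp only [comp_apply]
      rw [h2' w, h1' (adjoint A w)]
end

section
/- A bounded linear operator A on a complex Hilbert space H is posinormal if and only if there exists λ ≥ 0 such that AA* ≤ λ² A*A (in the sense of the ordering on self-adjoint operators). -/
open ContinuousLinearMap

section Douglas

variable {H : Type*} [NormedAddCommGroup H] [InnerProductSpace ℂ H] [CompleteSpace H]

/-- A Douglas-type factorization: if `‖C x‖ ≤ ‖B x‖` for all `x`, then `C = D ∘ B` for some
bounded operator `D`. -/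
lemma douglas_factor (B C : H →L[ℂ] H) (h : ∀ x, ‖C x‖ ≤ ‖B x‖) :
    ∃ D : H →L[ℂ] H, D ∘L B = C := by
  classical
  have hker : LinearMap.ker (B : H →ₗ[ℂ] H) ≤ LinearMap.ker (C : H →ₗ[ℂ] H) := by
    intro x hx
    rw [LinearMap.mem_ker] at hx ⊢
    have hx' : B x = 0 := hx
    have := h x
    rw [hx', norm_zero] at this
    exact norm_le_zero_iff.mp this
  set R : Submodule ℂ H := LinearMap.range (B : H →ₗ[ℂ] H) with hR
  let e0 : (H ⧸ LinearMap.ker (B : H →ₗ[ℂ] H)) ≃ₗ[ℂ] R :=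
    LinearMap.quotKerEquivRange (B : H →ₗ[ℂ] H)
  let φ : R →ₗ[ℂ] H :=
    ((LinearMap.ker (B : H →ₗ[ℂ] H)).liftQ (C : H →ₗ[ℂ] H) hker) ∘ₗ e0.symm.toLinearMap
  have hφ : ∀ (x : H) (hx : B x ∈ R), φ ⟨B x, hx⟩ = C x := by
    intro x hx
    have h1 : e0.symm ⟨B x, hx⟩ = Submodule.Quotient.mk x :=
      LinearMap.quotKerEquivRange_symm_apply_image (B : H →ₗ[ℂ] H) x hx
    simp only [φ, LinearMap.comp_apply, LinearEquiv.coe_toLinearMap, h1]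
    rfl
  have hbound : ∀ y : R, ‖φ y‖ ≤ 1 * ‖y‖ := by
    rintro ⟨y, hy⟩
    obtain ⟨x, rfl⟩ := hy
    have e1 : φ ⟨(B : H →ₗ[ℂ] H) x, ⟨x, rfl⟩⟩ = C x := hφ x ⟨x, rfl⟩
    rw [e1, one_mul]
    exact h x
  let φc : R →L[ℂ] H := φ.mkContinuous 1 hbound
  set K : Submodule ℂ H := R.topologicalClosure with hK
  haveI : CompleteSpace K := (R.isClosed_topologicalClosure).completeSpace_coe
  let einc : R →ₗ[ℂ] K := Submodule.inclusion R.le_topologicalClosure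
  have hiso : Isometry einc := AddMonoidHomClass.isometry_of_norm einc (fun x => rfl)
  let e : R →L[ℂ] K := ⟨einc, hiso.continuous⟩
  have hdense : DenseRange e := by
    intro y
    rw [closure_subtype]
    have himg : ((↑) : K → H) '' Set.range e = (R : Set H) := by
      ext z
      constructor
      · rintro ⟨w, ⟨v, rfl⟩, rfl⟩
        exact v.2
      · intro hz
        exact ⟨e ⟨z, hz⟩, ⟨⟨z, hz⟩, rfl⟩, rfl⟩
    rw [himg]
    exact y.2
  let D0 : K →L[ℂ] H := φc.extend e
  refine ⟨D0 ∘L (K.orthogonalProjectionOnto : H →L[ℂ] K), ?_⟩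
  ext x
  have hmemR : B x ∈ R := ⟨x, rfl⟩
  have hmemK : B x ∈ K := R.le_topologicalClosure hmemR
  have hproj : K.orthogonalProjectionOnto (B x) = ⟨B x, hmemK⟩ :=
    Submodule.orthogonalProjectionOnto_mem_subspace_eq_self (⟨B x, hmemK⟩ : K)
  have heq : (⟨B x, hmemK⟩ : K) = e ⟨B x, hmemR⟩ := rfl
  simp only [comp_apply, hproj, heq, ContinuousLinearMap.extend_eq _ hdense hiso.isUniformInducing, D0]
  have : φc ⟨B x, hmemR⟩ = C x := hφ x hmemR
  exact this

end Douglas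

theorem posinormal_iff_exists_lambda
    {H : Type*} [NormedAddCommGroup H] [InnerProductSpace ℂ H] [CompleteSpace H]
    (A : H →L[ℂ] H) :
    (∃ P : H →L[ℂ] H, P.IsPositive ∧ A ∘L adjoint A = adjoint A ∘L P ∘L A) ↔
      ∃ l : ℝ, 0 ≤ l ∧
        (((l : ℂ) ^ 2) • (adjoint A ∘L A) - A ∘L adjoint A).IsPositive := by
  constructor
  · rintro ⟨P, hP, hcomp⟩
    refine ⟨Real.sqrt ‖P‖, Real.sqrt_nonneg _, ?_⟩
    have hc : ((Real.sqrt ‖P‖ : ℂ)) ^ 2 = ((‖P‖ : ℝ) : ℂ) := by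
      rw [← Complex.ofReal_pow, Real.sq_sqrt (norm_nonneg P)]
    constructor
    · -- self-adjointness
      have h1 : IsSelfAdjoint (adjoint A ∘L A) := by
        rw [isSelfAdjoint_iff']
        rw [adjoint_comp, adjoint_adjoint]
      have h2 : IsSelfAdjoint (A ∘L adjoint A) := by
        rw [isSelfAdjoint_iff']
        rw [adjoint_comp, adjoint_adjoint]
      have hcs : IsSelfAdjoint ((Real.sqrt ‖P‖ : ℂ) ^ 2) := by
        rw [hc]
        exact Complex.conj_ofReal _
      exact isSelfAdjoint_iff_isSymmetric.mp (IsSelfAdjoint.sub (hcs.smul h1) h2)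
    · intro x
      have hPy : Complex.re (inner ℂ (P (A x)) (A x) : ℂ) ≤ ‖P‖ * ‖A x‖ ^ 2 := by
        calc Complex.re (inner ℂ (P (A x)) (A x) : ℂ)
            ≤ ‖(inner ℂ (P (A x)) (A x) : ℂ)‖ := Complex.re_le_norm _
          _ ≤ ‖P (A x)‖ * ‖A x‖ := norm_inner_le_norm _ _
          _ ≤ (‖P‖ * ‖A x‖) * ‖A x‖ :=
              mul_le_mul_of_nonneg_right (P.le_opNorm (A x)) (norm_nonneg _)
          _ = ‖P‖ * ‖A x‖ ^ 2 := by ring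
      have h1 : (A ∘L adjoint A) x = adjoint A (P (A x)) := by
        rw [hcomp]; rfl
      have h2 : (inner ℂ ((A ∘L adjoint A) x) x : ℂ) = inner ℂ (P (A x)) (A x) := by
        rw [h1, adjoint_inner_left]
      have h3 : (inner ℂ ((adjoint A ∘L A) x) x : ℂ) = inner ℂ (A x) (A x) := by
        rw [comp_apply, adjoint_inner_left]
      show 0 ≤ Complex.re (inner ℂ ((((Real.sqrt ‖P‖ : ℂ) ^ 2) • (adjoint A ∘L A)
        - A ∘L adjoint A) x) x : ℂ)
      rw [ContinuousLinearMap.sub_apply, inner_sub_left, ContinuousLinearMap.smul_apply,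
        inner_smul_left, h2, h3, hc, Complex.conj_ofReal, Complex.sub_re, Complex.re_ofReal_mul]
      have h4 : Complex.re (inner ℂ (A x) (A x) : ℂ) = ‖A x‖ ^ 2 := by
        rw [← inner_self_eq_norm_sq (𝕜 := ℂ)]; rfl
      rw [h4]
      linarith
  · rintro ⟨l, hl, hpos⟩
    have hineq : ∀ x, ‖adjoint A x‖ ≤ ‖((l : ℂ) • A) x‖ := by
      intro x
      have h0 := hpos.2 x
      have h3 : (inner ℂ ((adjoint A ∘L A) x) x : ℂ) = inner ℂ (A x) (A x) := by
        rw [comp_apply, adjoint_inner_left]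
      have h2 : (inner ℂ ((A ∘L adjoint A) x) x : ℂ) = inner ℂ (adjoint A x) (adjoint A x) := by
        rw [comp_apply, ← adjoint_adjoint A, adjoint_inner_left, adjoint_adjoint]
      rw [reApplyInnerSelf, ContinuousLinearMap.sub_apply, inner_sub_left,
        ContinuousLinearMap.smul_apply, inner_smul_left, map_sub, h2, h3] at h0
      have hc : (starRingEnd ℂ) ((l : ℂ) ^ 2) = (((l ^ 2 : ℝ)) : ℂ) := by
        push_cast
        rw [map_pow, Complex.conj_ofReal]
      simp only [RCLike.re_to_complex] at h0
      rw [hc, Complex.re_ofReal_mul] at h0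
      have h4 : Complex.re (inner ℂ (A x) (A x) : ℂ) = ‖A x‖ ^ 2 := by
        rw [← inner_self_eq_norm_sq (𝕜 := ℂ)]; rfl
      have h5 : Complex.re (inner ℂ (adjoint A x) (adjoint A x) : ℂ) = ‖adjoint A x‖ ^ 2 := by
        rw [← inner_self_eq_norm_sq (𝕜 := ℂ)]; rfl
      rw [h4, h5] at h0
      have h6 : ‖adjoint A x‖ ^ 2 ≤ (l * ‖A x‖) ^ 2 := by
        have : (l * ‖A x‖) ^ 2 = l ^ 2 * ‖A x‖ ^ 2 := by ring
        linarith [this]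
      have h7 : ‖adjoint A x‖ ≤ l * ‖A x‖ := by
        have := Real.sqrt_le_sqrt h6
        rwa [Real.sqrt_sq (norm_nonneg _), Real.sqrt_sq (mul_nonneg hl (norm_nonneg _))] at this
      rw [ContinuousLinearMap.smul_apply, norm_smul, Complex.norm_real,
        Real.norm_eq_abs, abs_of_nonneg hl]
      exact h7
    obtain ⟨D, hD⟩ := douglas_factor ((l : ℂ) • A) (adjoint A) hineq
    refine ⟨((l : ℂ) ^ 2) • (adjoint D ∘L D), ?_, ?_⟩
    · have hDD : (adjoint D ∘L D).IsPositive := by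
        have := isPositive_one.adjoint_conj D
        simpa [ContinuousLinearMap.one_def] using this
      constructor
      · have hcs : IsSelfAdjoint ((l : ℂ) ^ 2) := by
          rw [IsSelfAdjoint, Complex.star_def, map_pow, Complex.conj_ofReal]
        exact isSelfAdjoint_iff_isSymmetric.mp (hcs.smul hDD.isSelfAdjoint)
      · intro x
        have := hDD.2 x
        rw [reApplyInnerSelf] at this ⊢
        simp only [RCLike.re_to_complex] at this ⊢
        rw [ContinuousLinearMap.smul_apply, inner_smul_left, map_pow, Complex.conj_ofReal,
          ← Complex.ofReal_pow, Complex.re_ofReal_mul]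
        exact mul_nonneg (sq_nonneg l) this
    · have hD' : ∀ x, (l : ℂ) • D (A x) = adjoint A x := by
        intro x
        have := ContinuousLinearMap.ext_iff.mp hD x
        simpa [comp_apply] using this
      have h1 : adjoint A = (l : ℂ) • (D ∘L A) := by
        ext y
        rw [ContinuousLinearMap.smul_apply, comp_apply]
        exact (hD' y).symm
      have hA : A = (l : ℂ) • (adjoint A ∘L adjoint D) := by
        conv_lhs => rw [← adjoint_adjoint A, h1]
        rw [map_smulₛₗ (adjoint : (H →L[ℂ] H) ≃ₗᵢ⋆[ℂ] (H →L[ℂ] H)) _ _, Complex.conj_ofReal,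
          adjoint_comp]
      have hA' : ∀ y, A y = (l : ℂ) • adjoint A (adjoint D y) := by
        intro y
        conv_lhs => rw [hA]
        simp [comp_apply]
      ext x
      show A (adjoint A x) = _
      rw [← hD' x, map_smul, hA' (D (A x)), smul_smul]
      simp [comp_apply, sq, smul_smul, map_smul]
end

section
/- A bounded linear operator A on a complex Hilbert space H is posinormal if and only if there exists a bounded linear operator T on H such that A = A*T. -/
open ContinuousLinearMap
open scoped InnerProductSpace

set_option maxHeartbeats 2000000 in
set_option synthInstance.maxHeartbeats 1000000 in
theorem posinormal_iff_factor
    {H : Type*} [NormedAddCommGroup H] [InnerProductSpace ℂ H] [CompleteSpace H]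
    (A : H →L[ℂ] H) :
    (∃ P : H →L[ℂ] H, P.IsPositive ∧ A ∘L adjoint A = adjoint A ∘L P ∘L A) ↔
      ∃ T : H →L[ℂ] H, A = adjoint A ∘L T := by
  constructor
  · rintro ⟨P, hP, hfact⟩
    have h0 : 0 ≤ P := (nonneg_iff_isPositive P).mpr hP
    set Q : H →L[ℂ] H := CFC.sqrt P with hQdef
    have hQQ : Q * Q = P := CFC.sqrt_mul_sqrt_self P h0
    have hQsa : IsSelfAdjoint Q := IsSelfAdjoint.of_nonneg (CFC.sqrt_nonneg P)
    have hQadj : adjoint Q = Q := by rw [← star_eq_adjoint]; exact hQsa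
    set S : H →L[ℂ] H := Q ∘L A with hSdef
    -- key norm identity
    have hnorm : ∀ x : H, ‖S x‖ = ‖adjoint A x‖ := by
      intro x
      have hinner : (⟪S x, S x⟫_ℂ) = ⟪adjoint A x, adjoint A x⟫_ℂ := by
        have hPP : Q (Q (A x)) = P (A x) := by
          rw [← ContinuousLinearMap.mul_apply, hQQ]
        have h1 : (⟪S x, S x⟫_ℂ) = ⟪A x, P (A x)⟫_ℂ := by
          have hsym := (isSelfAdjoint_iff_isSymmetric.mp hQsa) (A x) (Q (A x))
          calc (⟪S x, S x⟫_ℂ) = ⟪Q (A x), Q (A x)⟫_ℂ := rfl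
            _ = ⟪A x, Q (Q (A x))⟫_ℂ := hsym
            _ = ⟪A x, P (A x)⟫_ℂ := by rw [hPP]
        have h2 : (⟪adjoint A x, adjoint A x⟫_ℂ) = ⟪A x, P (A x)⟫_ℂ := by
          rw [adjoint_inner_left]
          have := congrArg (fun (B : H →L[ℂ] H) => B x) hfact
          simp only [coe_comp', Function.comp_apply] at this
          rw [this, adjoint_inner_right]
        rw [h1, h2]
      have h1' := hinner
      rw [inner_self_eq_norm_sq_to_K, inner_self_eq_norm_sq_to_K] at h1'
      have h1 : (‖S x‖ : ℝ) ^ 2 = ‖adjoint A x‖ ^ 2 := by exact_mod_cast h1'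
      nlinarith [norm_nonneg (S x), norm_nonneg (adjoint A x)]
    -- kernel inclusion
    have hker : LinearMap.ker (S : H →ₗ[ℂ] H) ≤
        LinearMap.ker ((adjoint A : H →L[ℂ] H) : H →ₗ[ℂ] H) := by
      intro x hx
      have hx' : S x = 0 := hx
      have : ‖adjoint A x‖ = 0 := by rw [← hnorm x, hx', norm_zero]
      simpa [LinearMap.mem_ker] using norm_eq_zero.mp this
    set R : Submodule ℂ H := LinearMap.range (S : H →ₗ[ℂ] H) with hRdef
    set Rc : Submodule ℂ H := R.topologicalClosure with hRcdef
    haveI : CompleteSpace Rc := R.isClosed_topologicalClosure.completeSpace_coe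
    -- the linear map f₀ : R →ₗ H sending S x to A* x
    set f₀ : R →ₗ[ℂ] H :=
      ((LinearMap.ker (S : H →ₗ[ℂ] H)).liftQ
          ((adjoint A : H →L[ℂ] H) : H →ₗ[ℂ] H) hker).comp
        ((LinearMap.quotKerEquivRange (S : H →ₗ[ℂ] H)).symm :
          R →ₗ[ℂ] H ⧸ LinearMap.ker (S : H →ₗ[ℂ] H)) with hf₀def
    have hf₀ : ∀ x : H,
        f₀ ⟨(S : H →ₗ[ℂ] H) x, LinearMap.mem_range_self (S : H →ₗ[ℂ] H) x⟩
          = adjoint A x := by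
      intro x
      have h1 : (LinearMap.quotKerEquivRange (S : H →ₗ[ℂ] H)).symm
          ⟨(S : H →ₗ[ℂ] H) x, LinearMap.mem_range_self (S : H →ₗ[ℂ] H) x⟩ =
          Submodule.Quotient.mk x := by
        rw [LinearEquiv.symm_apply_eq]
        exact Subtype.ext (by
          simp [LinearMap.quotKerEquivRange_apply_mk])
      rw [hf₀def]
      simp only [LinearMap.comp_apply, LinearEquiv.coe_coe]
      rw [h1]
      simp [Submodule.liftQ_apply]
    have hf₀norm : ∀ y : R, ‖f₀ y‖ = ‖(y : H)‖ := by
      rintro ⟨y, hy⟩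
      obtain ⟨x, rfl⟩ := hy
      rw [hf₀ x]
      exact (hnorm x).symm
    set f : R →L[ℂ] H := LinearMap.mkContinuous f₀ 1 (by
      intro y
      rw [hf₀norm y, one_mul]
      exact le_of_eq rfl) with hfdef
    set e : R →L[ℂ] Rc := (R.subtypeL).codRestrict Rc
      (fun y => R.le_topologicalClosure y.2) with hedef
    have he_iso : Isometry e :=
      AddMonoidHomClass.isometry_of_norm e (fun y => rfl)
    have h_ui : IsUniformInducing e := he_iso.isUniformInducing
    have h_dense : DenseRange e := by
      have himg : (Subtype.val '' Set.range e : Set H) = (R : Set H) := by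
        ext z
        constructor
        · rintro ⟨-, ⟨w, rfl⟩, rfl⟩
          exact w.2
        · intro hz
          exact ⟨e ⟨z, hz⟩, ⟨⟨z, hz⟩, rfl⟩, rfl⟩
      intro y
      rw [closure_subtype, himg]
      have := y.2
      rwa [hRcdef, ← Submodule.topologicalClosure_coe] at *
    set U0 : Rc →L[ℂ] H := f.extend e with hU0def
    set U : H →L[ℂ] H := U0 ∘L (Rc.orthogonalProjectionOnto : H →L[ℂ] Rc) with hUdef
    have hU : ∀ x : H, U (S x) = adjoint A x := by
      intro x
      have hmem : S x ∈ Rc :=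
        R.le_topologicalClosure (LinearMap.mem_range_self (S : H →ₗ[ℂ] H) x)
      have hproj : Rc.orthogonalProjectionOnto (S x) = ⟨S x, hmem⟩ :=
        Submodule.orthogonalProjectionOnto_mem_subspace_eq_self (⟨S x, hmem⟩ : Rc)
      have h2 : (⟨S x, hmem⟩ : Rc) =
          e ⟨S x, LinearMap.mem_range_self (S : H →ₗ[ℂ] H) x⟩ := rfl
      calc U (S x) = U0 (Rc.orthogonalProjectionOnto (S x)) := rfl
        _ = U0 (e ⟨S x, LinearMap.mem_range_self (S : H →ₗ[ℂ] H) x⟩) := by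
            rw [hproj, h2]
        _ = f ⟨S x, LinearMap.mem_range_self (S : H →ₗ[ℂ] H) x⟩ :=
            ContinuousLinearMap.extend_eq f h_dense h_ui _
        _ = adjoint A x := hf₀ x
    have key : adjoint A = U ∘L S := by
      ext x
      exact (hU x).symm
    refine ⟨Q ∘L adjoint U, ?_⟩
    conv_lhs => rw [← adjoint_adjoint A, key]
    rw [hSdef, adjoint_comp, adjoint_comp, hQadj]
    ext x
    simp [coe_comp', Function.comp_apply]
  · rintro ⟨T, hT⟩
    refine ⟨T ∘L adjoint T, ?_, ?_⟩
    · have h := (isPositive_one (E := H) (𝕜 := ℂ)).conj_adjoint T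
      simpa using! h
    · calc A ∘L adjoint A
          = (adjoint A ∘L T) ∘L adjoint (adjoint A ∘L T) := by rw [← hT]
        _ = adjoint A ∘L (T ∘L adjoint T) ∘L A := by
            rw [adjoint_comp, adjoint_adjoint]
            ext x; simp [coe_comp', Function.comp_apply]
end

section
/- If T is a posinormal bounded linear operator on a complex Hilbert space and T has closed range, then T² also has closed range. -/
open ContinuousLinearMap

theorem sq_closed_range
    {H : Type*} [NormedAddCommGroup H] [InnerProductSpace ℂ H] [CompleteSpace H]
    (T : H →L[ℂ] H) (hpos : LinearMap.range (T : H →ₗ[ℂ] H) ≤ LinearMap.range ((adjoint T : H →L[ℂ] H) : H →ₗ[ℂ] H))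
    (hT : IsClosed (LinearMap.range (T : H →ₗ[ℂ] H) : Set H)) :
    IsClosed (LinearMap.range ((T ∘L T : H →L[ℂ] H) : H →ₗ[ℂ] H) : Set H) := by
  classical
  set N : Submodule ℂ H := LinearMap.ker (T : H →ₗ[ℂ] H) with hN
  set R : Submodule ℂ H := LinearMap.range (T : H →ₗ[ℂ] H) with hR
  -- completeness of relevant subspaces
  haveI : CompleteSpace N := (ContinuousLinearMap.isClosed_ker T).completeSpace_coe
  haveI : CompleteSpace R := hT.completeSpace_coe
  haveI : CompleteSpace (Nᗮ : Submodule ℂ H) :=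
    (Submodule.isClosed_orthogonal N).completeSpace_coe
  -- range of adjoint lies in (ker T)ᗮ
  have hadj : LinearMap.range ((adjoint T : H →L[ℂ] H) : H →ₗ[ℂ] H) ≤ Nᗮ := by
    rintro _ ⟨y, rfl⟩
    intro u hu
    have hu0 : T u = 0 := hu
    rw [ContinuousLinearMap.coe_coe, ContinuousLinearMap.adjoint_inner_right, hu0, inner_zero_left]
  have hRN : R ≤ Nᗮ := le_trans hpos hadj
  -- the restriction of T to (ker T)ᗮ, corestricted to range T
  set f : (Nᗮ : Submodule ℂ H) →L[ℂ] R :=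
    (T.comp (Nᗮ : Submodule ℂ H).subtypeL).codRestrict R
      (fun x => LinearMap.mem_range_self (T : H →ₗ[ℂ] H) x.1) with hf
  have hf_apply : ∀ x : (Nᗮ : Submodule ℂ H), (f x : H) = T x.1 := fun x => rfl
  have hinj : LinearMap.ker (f : (Nᗮ : Submodule ℂ H) →ₗ[ℂ] R) = ⊥ := by
    rw [LinearMap.ker_eq_bot']
    intro x hx
    have hx0 : T x.1 = 0 := by
      have := congrArg (Subtype.val) hx
      simpa [hf_apply] using this
    have hmemN : x.1 ∈ N := hx0
    have : x.1 = 0 := by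
      have h := x.2 x.1 hmemN
      simpa [inner_self_eq_zero] using h
    exact Subtype.ext this
  have hsurj : LinearMap.range (f : (Nᗮ : Submodule ℂ H) →ₗ[ℂ] R) = ⊤ := by
    rw [LinearMap.range_eq_top]
    rintro ⟨y, hy⟩
    obtain ⟨x, rfl⟩ := hy
    have hx : x ∈ N ⊔ Nᗮ := by
      rw [Submodule.sup_orthogonal_of_hasOrthogonalProjection]; trivial
    obtain ⟨a, ha, b, hb, rfl⟩ := Submodule.mem_sup.mp hx
    refine ⟨⟨b, hb⟩, ?_⟩
    apply Subtype.ext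
    have ha0 : T a = 0 := ha
    simp [hf_apply, map_add, ha0]
  set e : (Nᗮ : Submodule ℂ H) ≃L[ℂ] R :=
    ContinuousLinearEquiv.ofBijective f hinj hsurj with he
  -- T is bounded below on (ker T)ᗮ
  have hbdd : ∀ x : (Nᗮ : Submodule ℂ H), ‖x‖ ≤ ‖(e.symm : R →L[ℂ] (Nᗮ : Submodule ℂ H))‖ * ‖T x.1‖ := by
    intro x
    have h1 : e.symm (e x) = x := e.symm_apply_apply x
    calc ‖x‖ = ‖e.symm (e x)‖ := by rw [h1]
      _ ≤ ‖(e.symm : R →L[ℂ] (Nᗮ : Submodule ℂ H))‖ * ‖e x‖ :=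
        (e.symm : R →L[ℂ] (Nᗮ : Submodule ℂ H)).le_opNorm (e x)
      _ = ‖(e.symm : R →L[ℂ] (Nᗮ : Submodule ℂ H))‖ * ‖T x.1‖ := rfl
  -- the map g : R → H given by T, which is antilipschitz since R ≤ (ker T)ᗮ
  set g : R →L[ℂ] H := T.comp R.subtypeL with hg
  set C : NNReal := ‖(e.symm : R →L[ℂ] (Nᗮ : Submodule ℂ H))‖₊ with hC
  have hanti : AntilipschitzWith C g := by
    apply ContinuousLinearMap.antilipschitz_of_bound
    intro y
    have hyN : (y : H) ∈ Nᗮ := hRN y.2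
    have := hbdd ⟨y, hyN⟩
    simpa [hg, hC] using this
  have hclosed : IsClosed (Set.range g) := hanti.isClosed_range g.uniformContinuous
  have hset : (LinearMap.range ((T ∘L T : H →L[ℂ] H) : H →ₗ[ℂ] H) : Set H) = Set.range g := by
    ext y
    constructor
    · rintro ⟨x, rfl⟩
      exact ⟨⟨T x, LinearMap.mem_range_self (T : H →ₗ[ℂ] H) x⟩, rfl⟩
    · rintro ⟨⟨z, hz⟩, rfl⟩
      obtain ⟨x, rfl⟩ := hz
      exact ⟨x, rfl⟩
  rw [hset]
  exact hclosed
end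

section
/- If T is a posinormal bounded linear operator on a complex Hilbert space, then ker T = ker T². -/
open ContinuousLinearMap

theorem ker_eq_ker_sq
    {H : Type*} [NormedAddCommGroup H] [InnerProductSpace ℂ H] [CompleteSpace H]
    (T : H →L[ℂ] H) (hpos : LinearMap.range (T : H →ₗ[ℂ] H) ≤ LinearMap.range (adjoint T : H →ₗ[ℂ] H)) :
    LinearMap.ker (T : H →ₗ[ℂ] H) = LinearMap.ker ((T ∘L T : H →L[ℂ] H) : H →ₗ[ℂ] H) := by
  apply le_antisymm
  · intro x hx
    simp only [LinearMap.mem_ker, ContinuousLinearMap.coe_coe] at hx ⊢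
    simp [hx]
  · intro x hx
    simp only [LinearMap.mem_ker, ContinuousLinearMap.coe_coe, comp_apply] at hx ⊢
    obtain ⟨y, hy⟩ := hpos ⟨x, rfl⟩
    simp only [ContinuousLinearMap.coe_coe] at hy
    have : (inner ℂ (T x) (T x) : ℂ) = 0 := by
      rw [← hy, adjoint_inner_left, hy, hx, inner_zero_right]
    exact inner_self_eq_zero.mp this
end

section
/- If T is a posinormal bounded linear operator with closed range on a complex Hilbert space, then ran T* = ran (T*)². -/
open ContinuousLinearMap

theorem range_adjoint_eq_range_adjoint_sq
    {H : Type*} [NormedAddCommGroup H] [InnerProductSpace ℂ H] [CompleteSpace H]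
    (T : H →L[ℂ] H) (hpos : LinearMap.range (T : H →ₗ[ℂ] H) ≤ LinearMap.range (adjoint T : H →ₗ[ℂ] H))
    (hT : IsClosed (LinearMap.range (T : H →ₗ[ℂ] H) : Set H)) :
    LinearMap.range (adjoint T : H →ₗ[ℂ] H) = LinearMap.range ((adjoint T ∘L adjoint T : H →L[ℂ] H) : H →ₗ[ℂ] H) := by
  apply le_antisymm
  · rintro _ ⟨x, rfl⟩
    have : CompleteSpace (LinearMap.range (T : H →ₗ[ℂ] H)) := hT.completeSpace_coe
    obtain ⟨y, hy, z, hz, rfl⟩ := (LinearMap.range (T : H →ₗ[ℂ] H)).exists_add_mem_mem_orthogonal x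
    obtain ⟨w, rfl⟩ := hy
    obtain ⟨u, hu⟩ := hpos (LinearMap.mem_range_self (T : H →ₗ[ℂ] H) w)
    have hz0 : adjoint T z = 0 := by
      have h1 : (inner ℂ (adjoint T z) (adjoint T z) : ℂ) = 0 := by
        rw [adjoint_inner_left, ← inner_conj_symm]
        rw [show inner ℂ (T (adjoint T z)) z = 0 from (Submodule.mem_orthogonal _ z).1 hz _ (LinearMap.mem_range_self (T : H →ₗ[ℂ] H) _)]
        simp
      exact inner_self_eq_zero.1 h1
    refine ⟨u, ?_⟩
    simp [map_add, hz0]; exact congrArg (adjoint T) hu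
  · rintro _ ⟨x, rfl⟩
    exact ⟨adjoint T x, rfl⟩
end

section
/- If T is a posinormal bounded linear operator with closed range on a complex Hilbert space, then for every n ≥ 1, Tⁿ is posinormal and Tⁿ has closed range. -/
open ContinuousLinearMap
open scoped InnerProductSpace NNReal

section Aux

variable {H : Type*} [NormedAddCommGroup H] [InnerProductSpace ℂ H] [CompleteSpace H]

/-- For an operator with closed range: a lower bound on `(ker A)ᗮ` and
`(ker A)ᗮ ≤ range (adjoint A)`. -/
lemma aux_closed_range (A : H →L[ℂ] H) (hA : IsClosed (LinearMap.range (A : H →ₗ[ℂ] H) : Set H)) :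
    (∃ c : ℝ≥0, ∀ v ∈ (LinearMap.ker (A : H →ₗ[ℂ] H))ᗮ, ‖v‖ ≤ (c : ℝ) * ‖A v‖) ∧
      (LinearMap.ker (A : H →ₗ[ℂ] H))ᗮ ≤ LinearMap.range ((adjoint A : H →L[ℂ] H) : H →ₗ[ℂ] H) := by
  haveI : CompleteSpace (LinearMap.range (A : H →ₗ[ℂ] H)) := hA.completeSpace_coe
  set M : Submodule ℂ H := (LinearMap.ker (A : H →ₗ[ℂ] H))ᗮ with hMdef
  haveI : CompleteSpace M := (Submodule.isClosed_orthogonal _).completeSpace_coe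
  haveI : CompleteSpace (LinearMap.ker (A : H →ₗ[ℂ] H)) := A.isClosed_ker.completeSpace_coe
  have hMorth : Mᗮ = LinearMap.ker (A : H →ₗ[ℂ] H) := Submodule.orthogonal_orthogonal _
  have hmem : ∀ v : M, (A.comp M.subtypeL) v ∈ LinearMap.range (A : H →ₗ[ℂ] H) := fun v =>
    LinearMap.mem_range_self _ _
  set f : M →L[ℂ] (LinearMap.range (A : H →ₗ[ℂ] H)) :=
    (A.comp M.subtypeL).codRestrict (LinearMap.range (A : H →ₗ[ℂ] H)) hmem with hfdef
  have hfapp : ∀ v : M, ((f v : H)) = A v := fun v => rfl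
  have hfinj : LinearMap.ker (f : M →ₗ[ℂ] LinearMap.range (A : H →ₗ[ℂ] H)) = ⊥ := by
    rw [LinearMap.ker_eq_bot']
    intro v hv
    have hv' : A (v : H) = 0 := by
      have := congrArg (Subtype.val) hv
      simpa [hfapp] using this
    have hvK : (v : H) ∈ LinearMap.ker (A : H →ₗ[ℂ] H) := by simpa using hv'
    have : ⟪(v : H), (v : H)⟫_ℂ = 0 := by
      have := (Submodule.mem_orthogonal (LinearMap.ker (A : H →ₗ[ℂ] H)) (v : H)).mp v.2
      exact this _ hvK
    have : (v : H) = 0 := inner_self_eq_zero.mp this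
    exact Subtype.ext this
  have hfsurj : LinearMap.range (f : M →ₗ[ℂ] LinearMap.range (A : H →ₗ[ℂ] H)) = ⊤ := by
    rw [LinearMap.range_eq_top]
    rintro ⟨y, hy⟩
    obtain ⟨x, rfl⟩ := hy
    refine ⟨M.orthogonalProjectionOnto x, ?_⟩
    apply Subtype.ext
    change ((f (M.orthogonalProjectionOnto x)) : H) = A x
    rw [hfapp]
    have hsub : x - (M.orthogonalProjectionOnto x : H) ∈ Mᗮ :=
      M.sub_starProjection_mem_orthogonal x
    rw [hMorth] at hsub
    have h0 : A (x - (M.orthogonalProjectionOnto x : H)) = 0 := hsub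
    have := sub_eq_zero.mp (by simpa [map_sub] using h0)
    simpa using this.symm
  set e : M ≃L[ℂ] (LinearMap.range (A : H →ₗ[ℂ] H)) := ContinuousLinearEquiv.ofBijective f hfinj hfsurj
    with hedef
  have heapp : ∀ v : M, e v = f v := fun v => rfl
  constructor
  · refine ⟨‖(e.symm : (LinearMap.range (A : H →ₗ[ℂ] H)) →L[ℂ] M)‖₊, ?_⟩
    intro v hv
    have h := e.antilipschitz.le_mul_dist (⟨v, hv⟩ : M) 0
    simpa [dist_eq_norm, heapp, hfapp] using h
  · intro v hv
    set E' : (LinearMap.range (A : H →ₗ[ℂ] H)) →L[ℂ] M := (e.symm : (LinearMap.range (A : H →ₗ[ℂ] H)) →L[ℂ] M)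
    refine ⟨(((adjoint E') ⟨v, hv⟩ : LinearMap.range (A : H →ₗ[ℂ] H)) : H), ?_⟩
    apply ext_inner_right ℂ
    intro x
    set m : M := M.orthogonalProjectionOnto x
    have hsub : x - (m : H) ∈ Mᗮ := M.sub_starProjection_mem_orthogonal x
    have hAx : A x = (f m : H) := by
      rw [hfapp]
      have hsub' := hsub
      rw [hMorth] at hsub'
      have hk : A (x - (m : H)) = 0 := hsub'
      have := sub_eq_zero.mp (by simpa [map_sub] using hk)
      simpa using this
    have lhs : ⟪adjoint A (((adjoint E') ⟨v, hv⟩ : LinearMap.range (A : H →ₗ[ℂ] H)) : H), x⟫_ℂ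
        = ⟪(((adjoint E') ⟨v, hv⟩ : LinearMap.range (A : H →ₗ[ℂ] H)) : H), A x⟫_ℂ := adjoint_inner_left A _ _
    rw [ContinuousLinearMap.coe_coe, lhs, hAx]
    have : ⟪(((adjoint E') ⟨v, hv⟩ : LinearMap.range (A : H →ₗ[ℂ] H)) : H), ((f m : H))⟫_ℂ
        = ⟪(adjoint E') ⟨v, hv⟩, f m⟫_ℂ := rfl
    rw [this, adjoint_inner_left E' _ _]
    have hE'fm : E' (f m) = m := by
      have : f m = e m := rfl
      rw [this]
      exact e.symm_apply_apply m
    rw [hE'fm]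
    have hco : ⟪(⟨v, hv⟩ : M), m⟫_ℂ = ⟪v, (m : H)⟫_ℂ := rfl
    rw [hco]
    have hzero : ⟪v, x - (m : H)⟫_ℂ = 0 :=
      (Submodule.mem_orthogonal M (x - (m : H))).mp hsub v hv
    calc ⟪v, (m : H)⟫_ℂ = ⟪v, (m : H)⟫_ℂ + ⟪v, x - (m : H)⟫_ℂ := by rw [hzero, add_zero]
      _ = ⟪v, (m : H) + (x - (m : H))⟫_ℂ := (inner_add_right _ _ _).symm
      _ = ⟪v, x⟫_ℂ := by congr 1; abel

end Aux

theorem pow_posinormal_closed_range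
    {H : Type*} [NormedAddCommGroup H] [InnerProductSpace ℂ H] [CompleteSpace H]
    (T : H →L[ℂ] H) (hpos : LinearMap.range (T : H →ₗ[ℂ] H) ≤
      LinearMap.range ((adjoint T : H →L[ℂ] H) : H →ₗ[ℂ] H))
    (hT : IsClosed (LinearMap.range (T : H →ₗ[ℂ] H) : Set H)) :
    ∀ n : ℕ, 1 ≤ n →
      LinearMap.range ((T ^ n : H →L[ℂ] H) : H →ₗ[ℂ] H) ≤
        LinearMap.range ((adjoint (T ^ n) : H →L[ℂ] H) : H →ₗ[ℂ] H) ∧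
        IsClosed (LinearMap.range ((T ^ n : H →L[ℂ] H) : H →ₗ[ℂ] H) : Set H) := by
  classical
  set M : Submodule ℂ H := (LinearMap.ker (T : H →ₗ[ℂ] H))ᗮ with hMdef
  haveI : CompleteSpace M := (Submodule.isClosed_orthogonal _).completeSpace_coe
  haveI : CompleteSpace (LinearMap.ker (T : H →ₗ[ℂ] H)) := T.isClosed_ker.completeSpace_coe
  have hMorth : Mᗮ = LinearMap.ker (T : H →ₗ[ℂ] H) := Submodule.orthogonal_orthogonal _
  -- range T ≤ M
  have hrangeM : LinearMap.range (T : H →ₗ[ℂ] H) ≤ M := by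
    intro z hz
    have hz' : z ∈ LinearMap.range ((adjoint T : H →L[ℂ] H) : H →ₗ[ℂ] H) := hpos hz
    obtain ⟨w, rfl⟩ := hz'
    rw [hMdef, Submodule.mem_orthogonal]
    intro u hu
    have hu' : T u = 0 := hu
    calc ⟪u, adjoint T w⟫_ℂ = ⟪T u, w⟫_ℂ := adjoint_inner_right T _ _
      _ = 0 := by rw [hu']; simp
  -- any element of range T is orthogonal to ker T elements
  have horth : ∀ z ∈ LinearMap.range (T : H →ₗ[ℂ] H), ∀ x : H, T x = 0 → ⟪z, x⟫_ℂ = 0 := by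
    intro z hz x hx
    obtain ⟨w, rfl⟩ := hpos hz
    calc ⟪adjoint T w, x⟫_ℂ = ⟪w, T x⟫_ℂ := adjoint_inner_left T _ _
      _ = 0 := by rw [hx]; simp
  -- cancellation
  have hcancel : ∀ x : H, T (T x) = 0 → T x = 0 := by
    intro x hx
    have : ⟪T x, T x⟫_ℂ = 0 := horth (T x) (LinearMap.mem_range_self _ x) (T x) hx
    exact inner_self_eq_zero.mp this
  -- kernels of powers
  have hkerpow : ∀ n : ℕ, 1 ≤ n → ∀ x : H, (T ^ n) x = 0 ↔ T x = 0 := by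
    intro n hn
    induction n, hn using Nat.le_induction with
    | base => intro x; rw [pow_one]
    | succ n hn ih =>
      intro x
      constructor
      · intro hx
        have h1 : (T ^ n) (T x) = 0 := by
          rw [← ContinuousLinearMap.mul_apply, ← pow_succ]; exact hx
        have h2 : T (T x) = 0 := (ih (T x)).mp h1
        exact hcancel x h2
      · intro hx
        have : (T ^ (n + 1)) x = (T ^ n) (T x) := by
          rw [pow_succ, ContinuousLinearMap.mul_apply]
        rw [this, hx, map_zero]
  -- bound on M
  obtain ⟨c₀, hc₀⟩ := (aux_closed_range T hT).1
  set c : ℝ≥0 := c₀ + 1 with hcdef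
  have hc : ∀ v ∈ M, ‖v‖ ≤ (c : ℝ) * ‖T v‖ := by
    intro v hv
    calc ‖v‖ ≤ (c₀ : ℝ) * ‖T v‖ := hc₀ v hv
      _ ≤ (c : ℝ) * ‖T v‖ := by
          apply mul_le_mul_of_nonneg_right _ (norm_nonneg _)
          rw [hcdef]; push_cast; linarith
  -- T maps M into M
  have hTM : ∀ v ∈ M, T v ∈ M := fun v _ => hrangeM (LinearMap.mem_range_self _ v)
  -- power bound
  have hpowb : ∀ n : ℕ, ∀ v ∈ M, ‖v‖ ≤ ((c : ℝ) ^ n) * ‖(T ^ n) v‖ := by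
    intro n
    induction n with
    | zero => intro v _; simp
    | succ n ih =>
      intro v hv
      have h1 : ‖v‖ ≤ (c : ℝ) * ‖T v‖ := hc v hv
      have h2 : ‖T v‖ ≤ ((c : ℝ) ^ n) * ‖(T ^ n) (T v)‖ := ih (T v) (hTM v hv)
      have h3 : (T ^ (n + 1)) v = (T ^ n) (T v) := by
        rw [pow_succ, ContinuousLinearMap.mul_apply]
      have hcnn : (0 : ℝ) ≤ (c : ℝ) := c.coe_nonneg
      calc ‖v‖ ≤ (c : ℝ) * ‖T v‖ := h1
        _ ≤ (c : ℝ) * (((c : ℝ) ^ n) * ‖(T ^ n) (T v)‖) :=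
            mul_le_mul_of_nonneg_left h2 hcnn
        _ = ((c : ℝ) ^ (n + 1)) * ‖(T ^ n) (T v)‖ := by ring
        _ = ((c : ℝ) ^ (n + 1)) * ‖(T ^ (n + 1)) v‖ := by rw [h3]
  intro n hn
  -- range of T^n as set equals range of the restriction to M
  set g : M →L[ℂ] H := (T ^ n).comp M.subtypeL with hgdef
  have hgapp : ∀ v : M, g v = (T ^ n) (v : H) := fun v => rfl
  have hrange_eq : (LinearMap.range ((T ^ n : H →L[ℂ] H) : H →ₗ[ℂ] H) : Set H) = Set.range g := by
    ext y
    constructor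
    · rintro ⟨x, rfl⟩
      refine ⟨M.orthogonalProjectionOnto x, ?_⟩
      rw [hgapp]
      have hsub : x - (M.orthogonalProjectionOnto x : H) ∈ Mᗮ :=
        M.sub_starProjection_mem_orthogonal x
      rw [hMorth] at hsub
      have hT1 : T (x - (M.orthogonalProjectionOnto x : H)) = 0 := hsub
      have hTn : (T ^ n) (x - (M.orthogonalProjectionOnto x : H)) = 0 :=
        (hkerpow n hn _).mpr hT1
      have := sub_eq_zero.mp (by simpa [map_sub] using hTn)
      rw [ContinuousLinearMap.coe_coe]
      simpa using this.symm
    · rintro ⟨v, rfl⟩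
      exact ⟨(v : H), rfl⟩
  have hclosed : IsClosed (LinearMap.range ((T ^ n : H →L[ℂ] H) : H →ₗ[ℂ] H) : Set H) := by
    rw [hrange_eq]
    have hbg : ∀ v : M, ‖v‖ ≤ ((c ^ n : ℝ≥0) : ℝ) * ‖g v‖ := by
      intro v
      rw [hgapp]
      rw [NNReal.coe_pow]
      exact hpowb n (v : H) v.2
    exact (g.antilipschitz_of_bound hbg).isClosed_range g.uniformContinuous
  refine ⟨?_, hclosed⟩
  -- posinormality of T^n
  have hker_eq : LinearMap.ker ((T ^ n : H →L[ℂ] H) : H →ₗ[ℂ] H) = LinearMap.ker (T : H →ₗ[ℂ] H) := by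
    ext x
    simpa only [LinearMap.mem_ker, ContinuousLinearMap.coe_coe] using hkerpow n hn x
  have h2 := (aux_closed_range (T ^ n) hclosed).2
  rw [hker_eq] at h2
  refine le_trans ?_ h2
  -- range (T^n) ≤ M
  intro y hy
  obtain ⟨x, rfl⟩ := hy
  obtain ⟨m, hm⟩ := Nat.exists_eq_add_of_le hn
  have : (T ^ n) x = T ((T ^ m) x) := by
    rw [hm, add_comm, pow_succ', ContinuousLinearMap.mul_apply]
  rw [ContinuousLinearMap.coe_coe, this]
  exact hrangeM (LinearMap.mem_range_self _ _)
end

section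
/- If T is a hyponormal bounded linear operator with closed range on a complex Hilbert space, then Tⁿ has closed range for all n ≥ 1. -/
open ContinuousLinearMap

theorem hyponormal_pow_closed_range
    {H : Type*} [NormedAddCommGroup H] [InnerProductSpace ℂ H] [CompleteSpace H]
    (T : H →L[ℂ] H) (hhyp : ∀ x : H, ‖adjoint T x‖ ≤ ‖T x‖)
    (hT : IsClosed (LinearMap.range (T : H →ₗ[ℂ] H) : Set H)) :
    ∀ n : ℕ, 1 ≤ n → IsClosed (LinearMap.range ((T ^ n : H →L[ℂ] H) : H →ₗ[ℂ] H) : Set H) := by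
  classical
  -- kernel of T is contained in kernel of adjoint
  have hker : ∀ x : H, T x = 0 → adjoint T x = 0 := by
    intro x hx
    have h := hhyp x
    rw [hx, norm_zero] at h
    exact norm_le_zero_iff.mp h
  -- range of T is contained in (ker T)ᗮ
  set K : Submodule ℂ H := (LinearMap.ker (T : H →ₗ[ℂ] H))ᗮ with hK
  have hranK : ∀ x : H, T x ∈ K := by
    intro x
    rw [hK, Submodule.mem_orthogonal]
    intro y hy
    have hy' : T y = 0 := hy
    have : (adjoint T) y = 0 := hker y hy'
    calc inner (𝕜 := ℂ) y (T x) = inner (𝕜 := ℂ) ((adjoint T) y) x := by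
          rw [ContinuousLinearMap.adjoint_inner_left]
      _ = 0 := by rw [this, inner_zero_left]
  haveI : CompleteSpace (LinearMap.ker (T : H →ₗ[ℂ] H)) :=
    (ContinuousLinearMap.isClosed_ker T).completeSpace_coe
  haveI : CompleteSpace K := (LinearMap.ker (T : H →ₗ[ℂ] H)).isClosed_orthogonal.completeSpace_coe
  haveI : CompleteSpace (LinearMap.range (T : H →ₗ[ℂ] H)) := hT.completeSpace_coe
  -- the restriction of T to K, with codomain the range of T
  set S : K →L[ℂ] (LinearMap.range (T : H →ₗ[ℂ] H)) :=
    (T.comp K.subtypeL).codRestrict (LinearMap.range (T : H →ₗ[ℂ] H))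
      (fun x => LinearMap.mem_range_self _ _) with hS
  have hSinj : LinearMap.ker (S : K →ₗ[ℂ] LinearMap.range (T : H →ₗ[ℂ] H)) = ⊥ := by
    rw [LinearMap.ker_eq_bot']
    intro m hm
    have hm' : T (m : H) = 0 := congrArg Subtype.val hm
    have h1 : (m : H) ∈ LinearMap.ker (T : H →ₗ[ℂ] H) := hm'
    have h2 : (m : H) ∈ K := m.2
    have : (m : H) = 0 := by
      have := (Submodule.orthogonal_disjoint (LinearMap.ker (T : H →ₗ[ℂ] H))).le_bot ⟨h1, h2⟩
      simpa using this
    exact Subtype.ext this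
  have hSsurj : LinearMap.range (S : K →ₗ[ℂ] LinearMap.range (T : H →ₗ[ℂ] H)) = ⊤ := by
    rw [LinearMap.range_eq_top]
    rintro ⟨y, hy⟩
    obtain ⟨z, rfl⟩ := hy
    obtain ⟨a, ha, b, hb, rfl⟩ := (LinearMap.ker (T : H →ₗ[ℂ] H)).exists_add_mem_mem_orthogonal z
    refine ⟨⟨b, hb⟩, ?_⟩
    apply Subtype.ext
    show T b = T (a + b)
    have ha' : T a = 0 := ha
    rw [map_add, ha', zero_add]
  -- open mapping theorem: S is a continuous linear equivalence
  set e := ContinuousLinearEquiv.ofBijective S hSinj hSsurj with he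
  set C : ℝ := ‖(e.symm : (LinearMap.range (T : H →ₗ[ℂ] H)) →L[ℂ] K)‖ + 1 with hC
  have hCpos : 0 < C := by positivity
  -- lower bound for T on the range of T
  have hbound : ∀ y : H, y ∈ LinearMap.range (T : H →ₗ[ℂ] H) → ‖y‖ ≤ C * ‖T y‖ := by
    intro y hy
    have hyK : y ∈ K := by
      obtain ⟨z, rfl⟩ := hy
      exact hranK z
    have key : e.symm (S ⟨y, hyK⟩) = ⟨y, hyK⟩ := by
      rw [he]
      exact ContinuousLinearEquiv.ofBijective_symm_apply_apply S hSinj hSsurj _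
    have h1 := (e.symm : (LinearMap.range (T : H →ₗ[ℂ] H)) →L[ℂ] K).le_opNorm (S ⟨y, hyK⟩)
    rw [ContinuousLinearEquiv.coe_coe, key] at h1
    have h2 : ‖(⟨y, hyK⟩ : K)‖ = ‖y‖ := rfl
    have h3 : ‖S ⟨y, hyK⟩‖ = ‖T y‖ := rfl
    rw [h2, h3] at h1
    have : ‖(e.symm : (LinearMap.range (T : H →ₗ[ℂ] H)) →L[ℂ] K)‖ * ‖T y‖ ≤ C * ‖T y‖ := by
      apply mul_le_mul_of_nonneg_right _ (norm_nonneg _)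
      rw [hC]; linarith
    linarith
  -- iterate: lower bound for T^m on the range of T, plus invariance
  have hmem : ∀ (m : ℕ) (y : H), y ∈ LinearMap.range (T : H →ₗ[ℂ] H) → (T ^ m) y ∈ LinearMap.range (T : H →ₗ[ℂ] H) := by
    intro m
    induction m with
    | zero => intro y hy; simpa using hy
    | succ m ih =>
      intro y hy
      have : (T ^ (m + 1)) y = (T ^ m) (T y) := by
        rw [pow_succ, ContinuousLinearMap.mul_apply]
      rw [this]
      exact ih _ (LinearMap.mem_range_self _ _)
  have hpow : ∀ (m : ℕ) (y : H), y ∈ LinearMap.range (T : H →ₗ[ℂ] H) → ‖y‖ ≤ C ^ m * ‖(T ^ m) y‖ := by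
    intro m
    induction m with
    | zero => intro y _; simp
    | succ m ih =>
      intro y hy
      have hstep : (T ^ (m + 1)) y = (T ^ m) (T y) := by
        rw [pow_succ, ContinuousLinearMap.mul_apply]
      have h1 : ‖y‖ ≤ C * ‖T y‖ := hbound y hy
      have h2 : ‖T y‖ ≤ C ^ m * ‖(T ^ m) (T y)‖ := ih (T y) (LinearMap.mem_range_self _ _)
      calc ‖y‖ ≤ C * ‖T y‖ := h1
        _ ≤ C * (C ^ m * ‖(T ^ m) (T y)‖) := by
            exact mul_le_mul_of_nonneg_left h2 (le_of_lt hCpos)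
        _ = C ^ (m + 1) * ‖(T ^ (m + 1)) y‖ := by rw [hstep]; ring
  -- conclusion
  intro n hn
  obtain ⟨m, rfl⟩ : ∃ m, n = m + 1 := ⟨n - 1, (Nat.succ_pred_eq_of_pos hn).symm⟩
  set g : (LinearMap.range (T : H →ₗ[ℂ] H)) → H := fun y => (T ^ m) (y : H) with hg
  have hanti : AntilipschitzWith (C ^ m).toNNReal g := by
    apply AntilipschitzWith.of_le_mul_dist
    intro x y
    have hsub : (x : H) - (y : H) ∈ LinearMap.range (T : H →ₗ[ℂ] H) := by
      exact sub_mem x.2 y.2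
    have h := hpow m _ hsub
    have hmap : (T ^ m) ((x : H) - (y : H)) = g x - g y := by
      rw [hg]; simp [map_sub]
    rw [hmap] at h
    calc dist x y = ‖(x : H) - (y : H)‖ := by
          rw [Subtype.dist_eq, dist_eq_norm]
      _ ≤ C ^ m * ‖g x - g y‖ := h
      _ = (C ^ m).toNNReal * dist (g x) (g y) := by
          rw [dist_eq_norm, Real.coe_toNNReal _ (by positivity)]
  have huc : UniformContinuous g := by
    have : g = ⇑((T ^ m).comp (LinearMap.range (T : H →ₗ[ℂ] H)).subtypeL) := rfl
    rw [this]
    exact ((T ^ m).comp (LinearMap.range (T : H →ₗ[ℂ] H)).subtypeL).uniformContinuous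
  have hclosed : IsClosed (Set.range g) := hanti.isClosed_range huc
  have hsetEq : (LinearMap.range ((T ^ (m + 1) : H →L[ℂ] H) : H →ₗ[ℂ] H) : Set H) = Set.range g := by
    ext w
    constructor
    · rintro ⟨z, rfl⟩
      refine ⟨⟨T z, LinearMap.mem_range_self _ _⟩, ?_⟩
      show (T ^ m) (T z) = (T ^ (m + 1)) z
      rw [pow_succ, ContinuousLinearMap.mul_apply]
    · rintro ⟨⟨y, hy⟩, rfl⟩
      obtain ⟨z, rfl⟩ := hy
      refine ⟨z, ?_⟩
      show (T ^ (m + 1)) z = (T ^ m) (T z)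
      rw [pow_succ, ContinuousLinearMap.mul_apply]
  rw [hsetEq]
  exact hclosed
end

section
/- If T is a normal bounded linear operator with closed range on a complex Hilbert space, then Tⁿ has closed range for all n ≥ 1. -/
open ContinuousLinearMap
open scoped InnerProductSpace

lemma ker_adjoint_eq_orth
    {H : Type*} [NormedAddCommGroup H] [InnerProductSpace ℂ H] [CompleteSpace H]
    (T : H →L[ℂ] H) :
    LinearMap.ker (adjoint T : H →ₗ[ℂ] H) = (LinearMap.range (T : H →ₗ[ℂ] H))ᗮ := by
  ext x
  simp only [LinearMap.mem_ker, Submodule.mem_orthogonal, ContinuousLinearMap.coe_coe]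
  constructor
  · rintro h _ ⟨y, rfl⟩
    rw [ContinuousLinearMap.coe_coe, ← adjoint_inner_right]
    simp [h]
  · intro h
    rw [← inner_self_eq_zero (𝕜 := ℂ), adjoint_inner_right]
    exact h _ ⟨_, rfl⟩

lemma ker_eq_ker_adjoint
    {H : Type*} [NormedAddCommGroup H] [InnerProductSpace ℂ H] [CompleteSpace H]
    (T : H →L[ℂ] H) (hnormal : T ∘L adjoint T = adjoint T ∘L T) :
    LinearMap.ker (T : H →ₗ[ℂ] H) = LinearMap.ker (adjoint T : H →ₗ[ℂ] H) := by
  ext x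
  simp only [LinearMap.mem_ker, ContinuousLinearMap.coe_coe]
  have key : ∀ y : H, (⟪T y, T y⟫_ℂ : ℂ) = ⟪adjoint T y, adjoint T y⟫_ℂ := by
    intro y
    rw [← adjoint_inner_left, adjoint_inner_right]
    have h2 : (T ∘L adjoint T) y = (adjoint T ∘L T) y := by rw [hnormal]
    simp only [comp_apply] at h2
    rw [h2]
  constructor
  · intro h
    rw [← inner_self_eq_zero (𝕜 := ℂ), ← key, h, inner_zero_left]
  · intro h
    rw [← inner_self_eq_zero (𝕜 := ℂ), key, h, inner_zero_left]

theorem normal_pow_closed_range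
    {H : Type*} [NormedAddCommGroup H] [InnerProductSpace ℂ H] [CompleteSpace H]
    (T : H →L[ℂ] H) (hnormal : T ∘L adjoint T = adjoint T ∘L T)
    (hT : IsClosed (LinearMap.range (T : H →ₗ[ℂ] H) : Set H)) :
    ∀ n : ℕ, 1 ≤ n → IsClosed (LinearMap.range ((T ^ n : H →L[ℂ] H) : H →ₗ[ℂ] H) : Set H) := by
  -- (ker T)ᗮ = range T
  have horth : (LinearMap.ker (T : H →ₗ[ℂ] H))ᗮ = LinearMap.range (T : H →ₗ[ℂ] H) := by
    rw [ker_eq_ker_adjoint T hnormal, ker_adjoint_eq_orth,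
      Submodule.orthogonal_orthogonal_eq_closure]
    exact hT.submodule_topologicalClosure_eq
  -- every element of range T is T of an element of range T
  have hstep : ∀ y ∈ LinearMap.range (T : H →ₗ[ℂ] H), ∃ m ∈ LinearMap.range (T : H →ₗ[ℂ] H), T m = y := by
    rintro _ ⟨x, rfl⟩
    obtain ⟨k, hk, m, hm, rfl⟩ :=
      (LinearMap.ker (T : H →ₗ[ℂ] H)).exists_add_mem_mem_orthogonal x
    refine ⟨m, horth ▸ hm, ?_⟩
    simp [show T k = 0 from LinearMap.mem_ker.mp hk]
  -- range (T^n) = range T for n ≥ 1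
  have hrange : ∀ n : ℕ, 1 ≤ n → LinearMap.range ((T ^ n : H →L[ℂ] H) : H →ₗ[ℂ] H) = LinearMap.range (T : H →ₗ[ℂ] H) := by
    intro n hn
    induction n with
    | zero => omega
    | succ n ih =>
      rcases Nat.eq_or_lt_of_le hn with h | h
      · simp [← h]
      · have hn1 : 1 ≤ n := by omega
        have ihn := ih hn1
        apply le_antisymm
        · rintro _ ⟨x, rfl⟩
          rw [pow_succ']
          exact ⟨(T ^ n) x, rfl⟩
        · rintro y hy
          obtain ⟨m, hm, rfl⟩ := hstep y hy
          rw [← ihn] at hm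
          obtain ⟨x, rfl⟩ := hm
          exact ⟨x, by rw [pow_succ']; rfl⟩
  intro n hn
  rw [hrange n hn]
  exact hT
end

section
/- The operator U* + 2U, where U is the unilateral shift on ℓ², is bounded below: ‖(U* + 2U)s‖ ≥ ‖s‖ for every s ∈ ℓ²; in particular U* + 2U has closed range. -/
open ContinuousLinearMap

lemma shift_isometry_aux
    (U : lp (fun _ : ℕ => ℂ) 2 →L[ℂ] lp (fun _ : ℕ => ℂ) 2)
    (hU0 : ∀ s : lp (fun _ : ℕ => ℂ) 2, (U s : ∀ _ : ℕ, ℂ) 0 = 0)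
    (hUsucc : ∀ (s : lp (fun _ : ℕ => ℂ) 2) (n : ℕ),
      (U s : ∀ _ : ℕ, ℂ) (n + 1) = (s : ∀ _ : ℕ, ℂ) n)
    (s : lp (fun _ : ℕ => ℂ) 2) : ‖U s‖ = ‖s‖ := by
  have hp : 0 < (2 : ENNReal).toReal := by norm_num
  rw [lp.norm_eq_tsum_rpow hp, lp.norm_eq_tsum_rpow hp]
  congr 1
  have hsum : Summable (fun n : ℕ => ‖(U s : ∀ _ : ℕ, ℂ) n‖ ^ (2 : ENNReal).toReal) :=
    (lp.memℓp (U s)).summable hp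
  rw [Summable.tsum_eq_zero_add hsum]
  simp [hU0 s, hUsucc s, Real.zero_rpow (ne_of_gt hp)]

theorem shift_combination_bounded_below
    (U : lp (fun _ : ℕ => ℂ) 2 →L[ℂ] lp (fun _ : ℕ => ℂ) 2)
    (hU0 : ∀ s : lp (fun _ : ℕ => ℂ) 2, (U s : ∀ _ : ℕ, ℂ) 0 = 0)
    (hUsucc : ∀ (s : lp (fun _ : ℕ => ℂ) 2) (n : ℕ),
      (U s : ∀ _ : ℕ, ℂ) (n + 1) = (s : ∀ _ : ℕ, ℂ) n) :
    (∀ s : lp (fun _ : ℕ => ℂ) 2, ‖s‖ ≤ ‖(adjoint U + 2 • U) s‖) ∧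
      IsClosed (LinearMap.range ((adjoint U + 2 • U : lp (fun _ : ℕ => ℂ) 2 →L[ℂ] lp (fun _ : ℕ => ℂ) 2) :
          lp (fun _ : ℕ => ℂ) 2 →ₗ[ℂ] lp (fun _ : ℕ => ℂ) 2) :
        Set (lp (fun _ : ℕ => ℂ) 2)) := by
  have hiso := shift_isometry_aux U hU0 hUsucc
  have hUnorm : ‖U‖ ≤ 1 := by
    refine opNorm_le_bound U zero_le_one fun x => ?_
    rw [hiso x, one_mul]
  have hadj : ∀ s : lp (fun _ : ℕ => ℂ) 2, ‖adjoint U s‖ ≤ ‖s‖ := by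
    intro s
    calc ‖adjoint U s‖ ≤ ‖adjoint U‖ * ‖s‖ := le_opNorm _ _
      _ ≤ 1 * ‖s‖ := by
          gcongr
          rw [LinearIsometryEquiv.norm_map adjoint U]; exact hUnorm
      _ = ‖s‖ := one_mul _
  have key : ∀ s : lp (fun _ : ℕ => ℂ) 2, ‖s‖ ≤ ‖(adjoint U + 2 • U) s‖ := by
    intro s
    have h1 : (2 : ℝ) * ‖s‖ = ‖((adjoint U + 2 • U) s) - adjoint U s‖ := by
      have : ((adjoint U + 2 • U) s) - adjoint U s = (2 : ℂ) • (U s) := by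
        simp only [add_apply, smul_apply]
        module
      rw [this, norm_smul, hiso s]
      simp
    have h2 : ‖((adjoint U + 2 • U) s) - adjoint U s‖ ≤
        ‖(adjoint U + 2 • U) s‖ + ‖adjoint U s‖ := norm_sub_le _ _
    have := hadj s
    linarith
  refine ⟨key, ?_⟩
  have hanti : AntilipschitzWith 1 ⇑(adjoint U + 2 • U) := by
    refine AntilipschitzWith.of_le_mul_dist fun x y => ?_
    rw [dist_eq_norm, dist_eq_norm, ← map_sub]
    rw [NNReal.coe_one, one_mul]
    exact key (x - y)
  have := hanti.isClosed_range (ContinuousLinearMap.uniformContinuous (adjoint U + 2 • U))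
  rw [LinearMap.coe_range]
  exact this
end

section
/- If T is posinormal with closed range on a complex Hilbert space, then its restriction to ran T* is bounded below and maps ran T* into ran T*; consequently there exists c > 0 such that ‖T²h‖ ≥ c²‖h‖ for all h ∈ ran T*. -/
open ContinuousLinearMap

theorem restriction_bounded_below
    {H : Type*} [NormedAddCommGroup H] [InnerProductSpace ℂ H] [CompleteSpace H]
    (T : H →L[ℂ] H) (hpos : LinearMap.range (T : H →ₗ[ℂ] H) ≤ LinearMap.range (adjoint T : H →ₗ[ℂ] H))
    (hT : IsClosed (LinearMap.range (T : H →ₗ[ℂ] H) : Set H)) :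
    ∃ c : ℝ, 0 < c ∧
      (∀ h ∈ LinearMap.range (adjoint T : H →ₗ[ℂ] H),
        c * ‖h‖ ≤ ‖T h‖ ∧ T h ∈ LinearMap.range (adjoint T : H →ₗ[ℂ] H)) ∧
      ∀ h ∈ LinearMap.range (adjoint T : H →ₗ[ℂ] H), c ^ 2 * ‖h‖ ≤ ‖T (T h)‖ := by
  set K := LinearMap.ker (T : H →ₗ[ℂ] H) with hK
  -- range of adjoint is contained in (ker T)ᗮ
  have hsub : LinearMap.range (adjoint T : H →ₗ[ℂ] H) ≤ Kᗮ := by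
    rintro _ ⟨y, rfl⟩
    rw [Submodule.mem_orthogonal]
    intro u hu
    rw [ContinuousLinearMap.coe_coe, adjoint_inner_right]
    simp [(show T u = 0 from LinearMap.mem_ker.mp hu)]
  haveI : CompleteSpace (LinearMap.range (T : H →ₗ[ℂ] H)) := hT.completeSpace_coe
  let R : Submodule ℂ H := LinearMap.range (T : H →ₗ[ℂ] H)
  let S : Kᗮ →L[ℂ] R :=
    (T.comp Kᗮ.subtypeL).codRestrict R (fun x => LinearMap.mem_range_self _ _)
  have hSapp : ∀ x : Kᗮ, (S x : H) = T x := fun x => rfl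
  have hinj : LinearMap.ker (S : Kᗮ →ₗ[ℂ] R) = ⊥ := by
    rw [Submodule.eq_bot_iff]
    intro x hx
    have hx' : T (x : H) = 0 := by
      have := congrArg (Subtype.val) (LinearMap.mem_ker.mp hx)
      simpa [hSapp] using this
    have hxK : (x : H) ∈ K := LinearMap.mem_ker.mpr hx'
    have := K.orthogonal_disjoint.le_bot ⟨hxK, x.2⟩
    exact Subtype.ext (by simpa using this)
  have hsurj : LinearMap.range (S : Kᗮ →ₗ[ℂ] R) = ⊤ := by
    rw [Submodule.eq_top_iff']
    rintro ⟨_, x, rfl⟩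
    obtain ⟨u, hu, v, hv, rfl⟩ := K.exists_add_mem_mem_orthogonal x
    refine ⟨⟨v, hv⟩, ?_⟩
    apply Subtype.ext
    simp [hSapp, (show T u = 0 from LinearMap.mem_ker.mp hu)]
  let e := ContinuousLinearEquiv.ofBijective S hinj hsurj
  have hanti : AntilipschitzWith ‖(e.symm : R →L[ℂ] Kᗮ)‖₊ e := e.antilipschitz
  set κ : ℝ := ‖(e.symm : R →L[ℂ] Kᗮ)‖ with hκ
  have hκ0 : 0 ≤ κ := norm_nonneg _
  set c : ℝ := (κ + 1)⁻¹ with hc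
  have hc0 : 0 < c := inv_pos.mpr (by linarith)
  -- key bound on Kᗮ
  have key : ∀ h ∈ Kᗮ, c * ‖h‖ ≤ ‖T h‖ := by
    intro h hh
    have := hanti.le_mul_dist (⟨h, hh⟩ : Kᗮ) 0
    simp only [map_zero, dist_zero_right] at this
    have h1 : ‖h‖ ≤ κ * ‖T h‖ := by
      have heq : ‖e (⟨h, hh⟩ : Kᗮ)‖ = ‖T h‖ := by
        have : ((e (⟨h, hh⟩ : Kᗮ)) : H) = T h := hSapp _
        rw [← this]; rfl
      have hn : ‖(⟨h, hh⟩ : Kᗮ)‖ = ‖h‖ := rfl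
      rw [heq, hn] at this
      exact this
    have h2 : ‖h‖ ≤ (κ + 1) * ‖T h‖ := by nlinarith [norm_nonneg (T h)]
    rw [hc]
    rw [inv_mul_le_iff₀ (by linarith)]
    linarith [h2]
  refine ⟨c, hc0, ?_, ?_⟩
  · intro h hh
    exact ⟨key h (hsub hh), hpos (LinearMap.mem_range_self (T : H →ₗ[ℂ] H) h)⟩
  · intro h hh
    have h1 := key h (hsub hh)
    have hTh : T h ∈ LinearMap.range (adjoint T : H →ₗ[ℂ] H) := hpos (LinearMap.mem_range_self (T : H →ₗ[ℂ] H) h)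
    have h2 := key (T h) (hsub hTh)
    calc c ^ 2 * ‖h‖ = c * (c * ‖h‖) := by ring
      _ ≤ c * ‖T h‖ := by nlinarith
      _ ≤ ‖T (T h)‖ := h2
end
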